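/- Fix 2 ≤ r ≤ n and let B̃_n = {(a,s): 1 ≤ a ≤ n, 1 ≤ s ≤ ⌊n/2⌋, gcd(n,s) < n/r}. Then n²/2 · (1 − (r+1)²/(2n)) ≤ |B̃_n| ≤ n²/2. -/

import Mathlib

/-- `B̃_n` : pairs `(a,s)` with `1 ≤ a ≤ n`, `1 ≤ s ≤ ⌊n/2⌋` and `gcd(n,s) < n/r`. -/
def Btilde (n r : ℕ) : Finset (ℕ × ℕ) :=
  (Finset.Icc 1 n ×ˢ Finset.Icc 1 (n / 2)).filter fun q : ℕ × ℕ => Nat.gcd n q.2 * r < n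

lemma sum_half_bound : ∀ r : ℕ, 1 ≤ r → 4 * (∑ i ∈ Finset.Icc 2 r, i / 2) + 2 ≤ (r + 1) ^ 2 := by
  intro r hr
  induction r, hr using Nat.le_induction with
  | base => simp
  | succ r hr ih =>
    rw [Finset.sum_Icc_succ_top (by omega)]
    have h1 : (r + 1) / 2 * 2 ≤ r + 1 := Nat.div_mul_le_self _ _
    have h2 : (r + 1 + 1) ^ 2 = (r + 1) ^ 2 + 2 * (r + 1) + 1 := by ring
    omega

/-- `n²/2 · (1 − (r+1)²/(2n)) ≤ |B̃_n| ≤ n²/2`. -/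
theorem stmt13 (n r : ℕ) (hr : 2 ≤ r) (hrn : r ≤ n) :
    (n : ℝ) ^ 2 / 2 * (1 - ((r : ℝ) + 1) ^ 2 / (2 * n)) ≤ ((Btilde n r).card : ℝ) ∧
      ((Btilde n r).card : ℝ) ≤ (n : ℝ) ^ 2 / 2 := by
  have hn0 : 0 < n := by omega
  set S := (Finset.Icc 1 (n / 2)).filter (fun s => Nat.gcd n s * r < n) with hS
  set T := (Finset.Icc 1 (n / 2)).filter (fun s => ¬(Nat.gcd n s * r < n)) with hT
  have hprod : Btilde n r = Finset.Icc 1 n ×ˢ S := by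
    ext ⟨a, s⟩
    simp only [Btilde, hS, Finset.mem_filter, Finset.mem_product, Finset.mem_Icc]
    tauto
  have hcard : (Btilde n r).card = n * S.card := by
    rw [hprod, Finset.card_product, Nat.card_Icc]; simp
  have hST : S.card + T.card = n / 2 := by
    rw [hS, hT, Finset.card_filter_add_card_filter_not, Nat.card_Icc]; simp
  have hTcard : T.card ≤ ((Finset.Icc 2 r).sigma fun i => Finset.Icc 1 (i / 2)).card := by
    apply Finset.card_le_card_of_injOn
      (fun s => ⟨n / Nat.gcd n s, s / Nat.gcd n s⟩)
    · intro s hs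
      simp only [hT, Finset.mem_coe, Finset.mem_filter, Finset.mem_Icc, not_lt] at hs
      obtain ⟨⟨hs1, hs2⟩, hs3⟩ := hs
      set g := Nat.gcd n s with hg
      have hg0 : 0 < g := Nat.gcd_pos_of_pos_left s hn0
      have hgn : g ∣ n := Nat.gcd_dvd_left n s
      have hgs : g ∣ s := Nat.gcd_dvd_right n s
      have hig : n / g * g = n := Nat.div_mul_cancel hgn
      have hjg : s / g * g = s := Nat.div_mul_cancel hgs
      have hgle : g ≤ s := Nat.le_of_dvd (by omega) hgs
      simp only [Finset.mem_coe, Finset.mem_sigma, Finset.mem_Icc]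
      refine ⟨⟨?_, ?_⟩, ?_, ?_⟩
      · -- 2 ≤ n / g
        have h2g : 2 * g ≤ n / g * g := by
          rw [hig]; omega
        exact le_of_mul_le_mul_right (by omega) hg0
      · -- n / g ≤ r
        have : n / g * g ≤ r * g := by rw [hig]; linarith [hs3, Nat.mul_comm g r]
        exact le_of_mul_le_mul_right this hg0
      · exact (Nat.one_le_div_iff hg0).mpr hgle
      · -- s / g ≤ (n / g) / 2
        rw [Nat.le_div_iff_mul_le (by norm_num)]
        have : s / g * 2 * g ≤ n / g * g := by
          rw [hig]
          have : s / g * 2 * g = 2 * s := by rw [mul_comm (s / g) 2, mul_assoc, hjg]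
          omega
        exact le_of_mul_le_mul_right this hg0
    · intro s₁ h₁ s₂ h₂ heq
      simp only [hT, Finset.mem_coe, Finset.mem_filter, Finset.mem_Icc, not_lt] at h₁ h₂
      have hd₁ : Nat.gcd n s₁ ∣ n := Nat.gcd_dvd_left n s₁
      have hd₂ : Nat.gcd n s₂ ∣ n := Nat.gcd_dvd_left n s₂
      have hfst : n / Nat.gcd n s₁ = n / Nat.gcd n s₂ := congrArg Sigma.fst heq
      have hsnd : s₁ / Nat.gcd n s₁ = s₂ / Nat.gcd n s₂ := by
        have := congrArg Sigma.snd heq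
        simpa [hfst] using this
      have hgeq : Nat.gcd n s₁ = Nat.gcd n s₂ := by
        have e₁ : n / (n / Nat.gcd n s₁) = Nat.gcd n s₁ := Nat.div_div_self hd₁ hn0.ne'
        have e₂ : n / (n / Nat.gcd n s₂) = Nat.gcd n s₂ := Nat.div_div_self hd₂ hn0.ne'
        rw [← e₁, ← e₂, hfst]
      calc s₁ = s₁ / Nat.gcd n s₁ * Nat.gcd n s₁ := (Nat.div_mul_cancel (Nat.gcd_dvd_right n s₁)).symm
        _ = s₂ / Nat.gcd n s₂ * Nat.gcd n s₂ := by rw [hsnd, hgeq]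
        _ = s₂ := Nat.div_mul_cancel (Nat.gcd_dvd_right n s₂)
  have hsig : ((Finset.Icc 2 r).sigma fun i => Finset.Icc 1 (i / 2)).card
      = ∑ i ∈ Finset.Icc 2 r, i / 2 := by
    rw [Finset.card_sigma]
    simp [Nat.card_Icc]
  have hsum := sum_half_bound r (by omega)
  rw [hsig] at hTcard
  have key : 2 * n ≤ 4 * S.card + (r + 1) ^ 2 := by omega
  have hkeyR : (2 * n : ℝ) ≤ 4 * (S.card : ℝ) + ((r : ℝ) + 1) ^ 2 := by
    exact_mod_cast key
  have hnR : (0 : ℝ) < n := by exact_mod_cast hn0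
  have hcardR : ((Btilde n r).card : ℝ) = n * S.card := by exact_mod_cast hcard
  constructor
  · have hlhs : (n : ℝ) ^ 2 / 2 * (1 - ((r : ℝ) + 1) ^ 2 / (2 * n))
        = (2 * (n : ℝ) ^ 2 - n * ((r : ℝ) + 1) ^ 2) / 4 := by
      field_simp
      ring
    rw [hlhs, hcardR, div_le_iff₀ (by norm_num : (0:ℝ) < 4)]
    nlinarith [mul_le_mul_of_nonneg_left hkeyR hnR.le]
  · rw [hcardR]
    have hhalf : ((n / 2 : ℕ) : ℝ) ≤ (n : ℝ) / 2 := by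
      have := Nat.div_mul_le_self n 2
      have : ((n / 2 : ℕ) : ℝ) * 2 ≤ (n : ℝ) := by exact_mod_cast this
      linarith
    have hSc : (S.card : ℝ) ≤ ((n / 2 : ℕ) : ℝ) := by exact_mod_cast (by omega : S.card ≤ n / 2)
    calc (n : ℝ) * S.card ≤ (n : ℝ) * ((n : ℝ) / 2) := by
          apply mul_le_mul_of_nonneg_left (hSc.trans hhalf) hnR.le
      _ = (n : ℝ) ^ 2 / 2 := by ring
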